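/- Let n be a positive natural number, α > 0, λ ∈ ℝ, and set λ' = λ/α. Let s : Fin n → ℝ with s i > 0 for all i, and let M be the diagonal linear map on EuclideanSpace ℝ (Fin n) with (M θ) i = (θ i)/(s i). Let (f_t)_{t∈ℕ} be a sequence of differentiable batch losses f_t : EuclideanSpace ℝ (Fin n) → ℝ, and define f_t^sreg(θ) = f_t(θ) + (λ'/2)·∑_i s i·(θ i)². Let (x_t) and (y_t) be sequences with x_0 = y_0 satisfying x_{t+1} = x_t − α·M(∇f_t^sreg(x_t)) and y_{t+1} = (1 − λ)·y_t − α·M(∇f_t(y_t)). Then x_t = y_t for all t ∈ ℕ; i.e. the preconditioned method with fixed preconditioner diag(s)⁻¹ executes the same steps on the scale-adjusted regularized losses without weight decay as it executes on the unregularized losses with decoupled weight decay λ. -/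

import Mathlib

/-- Proposition 3 (iterates): the preconditioned method with fixed preconditioner
`M = diag(s)⁻¹` executes the same steps on the scale-adjusted regularized batch losses
`f_t^sreg θ = f_t θ + (λ'/2)·∑ i, s i·(θ i)²` with `λ' = λ/α` (without weight decay) as it
executes on the unregularized batch losses with decoupled weight decay `λ`. -/
theorem preconditioned_sreg_iterates_eq_weight_decay_iterates
    (n : ℕ) (hn : 0 < n) (α lam : ℝ) (hα : 0 < α)
    (s : Fin n → ℝ) (hs : ∀ i, 0 < s i)
    (M : EuclideanSpace ℝ (Fin n) →ₗ[ℝ] EuclideanSpace ℝ (Fin n))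
    (hM : ∀ (θ : EuclideanSpace ℝ (Fin n)) (i : Fin n), M θ i = θ i / s i)
    (f : ℕ → EuclideanSpace ℝ (Fin n) → ℝ) (hf : ∀ t, Differentiable ℝ (f t))
    (fsreg : ℕ → EuclideanSpace ℝ (Fin n) → ℝ)
    (hfsreg : ∀ (t : ℕ) (θ : EuclideanSpace ℝ (Fin n)),
      fsreg t θ = f t θ + ((lam / α) / 2) * ∑ i, s i * (θ i) ^ 2)
    (x y : ℕ → EuclideanSpace ℝ (Fin n))
    (h0 : x 0 = y 0)
    (hx : ∀ t, x (t + 1) = x t - α • M (gradient (fsreg t) (x t)))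
    (hy : ∀ t, y (t + 1) = (1 - lam) • y t - α • M (gradient (f t) (y t))) :
    ∀ t, x t = y t := by
  set c : ℝ := (lam / α) / 2 with hc
  -- the elementwise scaling vector
  have grad_eq : ∀ (t : ℕ) (θ : EuclideanSpace ℝ (Fin n)),
      gradient (fsreg t) θ
        = gradient (f t) θ + (lam / α) • ((WithLp.equiv 2 (Fin n → ℝ)).symm fun i => s i * θ i) := by
    intro t θ
    apply HasGradientAt.gradient
    have hfun : fsreg t = fun θ : EuclideanSpace ℝ (Fin n) =>
        f t θ + c * ∑ i, s i * (θ i) ^ 2 := funext (hfsreg t)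
    rw [hfun]
    have hf' : HasFDerivAt (f t)
        ((InnerProductSpace.toDual ℝ (EuclideanSpace ℝ (Fin n))) (gradient (f t) θ)) θ :=
      ((hf t).differentiableAt.hasGradientAt).hasFDerivAt
    have h1 : ∀ i : Fin n, HasFDerivAt
        (fun θ : EuclideanSpace ℝ (Fin n) => s i * (θ i) ^ 2)
        (s i • (θ i • (EuclideanSpace.proj i : EuclideanSpace ℝ (Fin n) →L[ℝ] ℝ)
          + θ i • (EuclideanSpace.proj i : EuclideanSpace ℝ (Fin n) →L[ℝ] ℝ))) θ := by
      intro i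
      have := (((EuclideanSpace.proj i (𝕜 := ℝ)).hasFDerivAt (x := θ)).mul
        ((EuclideanSpace.proj i (𝕜 := ℝ)).hasFDerivAt (x := θ))).const_mul (s i)
      simpa [pow_two] using this
    have hQ := (HasFDerivAt.sum (fun i (_ : i ∈ Finset.univ) => h1 i)).const_mul c
    have hsum := hf'.add hQ
    rw [hasGradientAt_iff_hasFDerivAt]
    convert hsum using 1
    · rfl
    · rfl
    · funext θ'
      simp only [Pi.add_apply, Finset.sum_apply]
    ext w
    simp only [InnerProductSpace.toDual_apply_apply, PiLp.inner_apply, RCLike.inner_apply,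
      starRingEnd_apply, star_trivial, ContinuousLinearMap.add_apply,
      ContinuousLinearMap.smul_apply, ContinuousLinearMap.coe_sum',
      Finset.sum_apply, PiLp.proj_apply, PiLp.add_apply, PiLp.smul_apply,
      smul_eq_mul, WithLp.equiv_symm_apply, PiLp.toLp_apply]
    rw [Finset.mul_sum, ← Finset.sum_add_distrib]
    refine Finset.sum_congr rfl fun i _ => ?_
    rw [hc]
    field_simp
    ring
  have hMv : ∀ θ : EuclideanSpace ℝ (Fin n),
      M ((WithLp.equiv 2 (Fin n → ℝ)).symm fun i => s i * θ i) = θ := by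
    intro θ
    ext i
    rw [hM]; simp only [WithLp.equiv_symm_apply, PiLp.toLp_apply]
    exact mul_div_cancel_left₀ _ (hs i).ne'
  intro t
  induction t with
  | zero => exact h0
  | succ t ih =>
    rw [hx, hy, ← ih, grad_eq, map_add, map_smul, hMv, smul_add, smul_smul,
      mul_div_cancel₀ lam hα.ne']
    module
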